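/- A residuated lattice A is quasicomplemented if and only if every filter of A containing no dense element is contained in some minimal prime filter. -/
import Mathlib


/-- A (bounded, integral, commutative) residuated lattice. -/
class ResLattice (A : Type*) extends Lattice A, CommMonoid A, OrderBot A where
  himp : A → A → A
  adjunction : ∀ x y z : A, x * y ≤ z ↔ x ≤ himp y z
  le_one : ∀ x : A, x ≤ 1

variable {A : Type*} [ResLattice A]

/-- Coannihilator of a subset: `X^⊥ = {a | a ⊔ x = 1 for all x ∈ X}`. -/
def Coann (X : Set A) : Set A := {a | ∀ x ∈ X, a ⊔ x = 1}

/-- Coannulet of an element: `x^⊥`. -/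
def rperp (x : A) : Set A := Coann {x}

/-- The principal filter generated by `x`. -/
def PFil (x : A) : Set A := {a | ∃ n : ℕ, 0 < n ∧ x ^ n ≤ a}

/-- Filters of a residuated lattice. -/
def IsRLFilter (F : Set A) : Prop :=
  F.Nonempty ∧ (∀ x ∈ F, ∀ y ∈ F, x * y ∈ F) ∧ (∀ x ∈ F, ∀ y : A, x ⊔ y ∈ F)

/-- Prime filters. -/
def IsRLPrime (P : Set A) : Prop :=
  IsRLFilter P ∧ P ≠ Set.univ ∧ ∀ x y : A, x ⊔ y ∈ P → x ∈ P ∨ y ∈ P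

/-- Minimal prime filters. -/
def IsRLMinPrime (P : Set A) : Prop :=
  IsRLPrime P ∧ ∀ Q : Set A, IsRLPrime Q → Q ⊆ P → Q = P

/-- Quasicomplemented residuated lattice. -/
def Quasicomplemented (A : Type*) [ResLattice A] : Prop :=
  ∀ x : A, ∃ y : A, Coann (rperp x) = rperp y

/-- α-filters. -/
def IsAlphaFilter (F : Set A) : Prop :=
  IsRLFilter F ∧ ∀ x ∈ F, Coann (rperp x) ⊆ F

/-- The α-filter generated by a subset. -/
def alphaGen (X : Set A) : Set A := ⋂₀ {G : Set A | IsAlphaFilter G ∧ X ⊆ G}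

lemma rl_le_one (x : A) : x ≤ 1 := ResLattice.le_one x

lemma rl_mul_le_mul {a b c d : A} (h1 : a ≤ b) (h2 : c ≤ d) : a * c ≤ b * d := by
  have hbd : b ≤ ResLattice.himp d (b * d) :=
    (ResLattice.adjunction b d (b * d)).1 le_rfl
  have h1' : a * d ≤ b * d :=
    (ResLattice.adjunction a d (b * d)).2 (le_trans h1 hbd)
  have hda : d ≤ ResLattice.himp a (d * a) :=
    (ResLattice.adjunction d a (d * a)).1 le_rfl
  have h2' : c * a ≤ d * a :=
    (ResLattice.adjunction c a (d * a)).2 (le_trans h2 hda)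
  calc a * c = c * a := mul_comm _ _
    _ ≤ d * a := h2'
    _ = a * d := mul_comm _ _
    _ ≤ b * d := h1'

lemma rl_mul_le_left (x y : A) : x * y ≤ x := by
  have := rl_mul_le_mul (le_refl x) (rl_le_one y)
  simpa using this

lemma rl_mul_le_right (x y : A) : x * y ≤ y := by
  rw [mul_comm]; exact rl_mul_le_left y x

lemma rl_mul_sup (a b c : A) : a * (b ⊔ c) = a * b ⊔ a * c := by
  apply le_antisymm
  · have hb : b ≤ ResLattice.himp a (a * b ⊔ a * c) := by
      apply (ResLattice.adjunction b a _).1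
      rw [mul_comm]; exact le_sup_left
    have hc : c ≤ ResLattice.himp a (a * b ⊔ a * c) := by
      apply (ResLattice.adjunction c a _).1
      rw [mul_comm]; exact le_sup_right
    have := (ResLattice.adjunction (b ⊔ c) a _).2 (sup_le hb hc)
    rw [mul_comm] at this; exact this
  · exact sup_le (rl_mul_le_mul le_rfl le_sup_left) (rl_mul_le_mul le_rfl le_sup_right)

lemma rl_sup_mul_one {a x y : A} (hx : a ⊔ x = 1) (hy : a ⊔ y = 1) :
    a ⊔ x * y = 1 := by
  apply le_antisymm (rl_le_one _)
  have h1 : (a ⊔ x) * a ≤ a ⊔ x * y := le_trans (rl_mul_le_right _ _) le_sup_left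
  have h2 : (a ⊔ x) * y ≤ a ⊔ x * y := by
    rw [mul_comm, rl_mul_sup]
    exact sup_le (le_trans (rl_mul_le_right _ _) le_sup_left)
      (by rw [mul_comm]; exact le_sup_right)
  calc (1 : A) = (a ⊔ x) * (a ⊔ y) := by rw [hx, hy, mul_one]
    _ = (a ⊔ x) * a ⊔ (a ⊔ x) * y := rl_mul_sup _ _ _
    _ ≤ a ⊔ x * y := sup_le h1 h2

lemma rl_sup_pow_one {a x : A} (hx : a ⊔ x = 1) (n : ℕ) : a ⊔ x ^ n = 1 := by
  induction n with
  | zero => simpa using le_antisymm (rl_le_one _) le_sup_right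
  | succ n ih => rw [pow_succ]; exact rl_sup_mul_one ih hx

lemma rl_pow_sup_le (x y : A) : ∀ k n m, n + m = k → (x ⊔ y) ^ k ≤ x ^ n ⊔ y ^ m := by
  intro k
  induction k with
  | zero =>
    intro n m h
    obtain ⟨rfl, rfl⟩ : n = 0 ∧ m = 0 := by omega
    simp
  | succ k ih =>
    intro n m h
    match n, m with
    | 0, m => exact le_trans (rl_le_one _) (by simpa using le_sup_left)
    | n, 0 => exact le_trans (rl_le_one _) (by simpa using le_sup_right)
    | n+1, m+1 =>
      have h1 : (x ⊔ y) ^ k ≤ x ^ n ⊔ y ^ (m+1) := ih n (m+1) (by omega)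
      have h2 : (x ⊔ y) ^ k ≤ x ^ (n+1) ⊔ y ^ m := ih (n+1) m (by omega)
      rw [pow_succ, rl_mul_sup]
      apply sup_le
      · calc (x ⊔ y) ^ k * x ≤ (x ^ n ⊔ y ^ (m+1)) * x := rl_mul_le_mul h1 le_rfl
          _ = x ^ n * x ⊔ y ^ (m+1) * x := by rw [mul_comm, rl_mul_sup, mul_comm x, mul_comm x]
          _ ≤ x ^ (n+1) ⊔ y ^ (m+1) := by
              apply sup_le
              · rw [← pow_succ]; exact le_sup_left
              · exact le_trans (rl_mul_le_left _ _) le_sup_right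
      · calc (x ⊔ y) ^ k * y ≤ (x ^ (n+1) ⊔ y ^ m) * y := rl_mul_le_mul h2 le_rfl
          _ = x ^ (n+1) * y ⊔ y ^ m * y := by rw [mul_comm, rl_mul_sup, mul_comm y, mul_comm y]
          _ ≤ x ^ (n+1) ⊔ y ^ (m+1) := by
              apply sup_le
              · exact le_trans (rl_mul_le_left _ _) le_sup_left
              · rw [← pow_succ]; exact le_sup_right

lemma rl_one_mem {F : Set A} (hF : IsRLFilter F) : (1 : A) ∈ F := by
  obtain ⟨a, ha⟩ := hF.1
  have := hF.2.2 a ha 1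
  rwa [le_antisymm (rl_le_one _) le_sup_right] at this

lemma rl_mem_of_le {F : Set A} (hF : IsRLFilter F) {a b : A} (ha : a ∈ F) (h : a ≤ b) :
    b ∈ F := by
  have := hF.2.2 a ha b
  rwa [sup_eq_right.2 h] at this

lemma rl_pow_mem {F : Set A} (hF : IsRLFilter F) {a : A} (ha : a ∈ F) (n : ℕ) :
    a ^ n ∈ F := by
  induction n with
  | zero => simpa using rl_one_mem hF
  | succ n ih => rw [pow_succ]; exact hF.2.1 _ ih _ ha

/-- Filter generated by `F` and `x`. -/
def rlGen (F : Set A) (x : A) : Set A := {a | ∃ p ∈ F, ∃ n : ℕ, p * x ^ n ≤ a}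

lemma rlGen_filter {F : Set A} (hF : IsRLFilter F) (x : A) : IsRLFilter (rlGen F x) := by
  refine ⟨⟨1, 1, rl_one_mem hF, 0, by simpa using rl_le_one _⟩, ?_, ?_⟩
  · rintro a ⟨p, hp, n, hn⟩ b ⟨q, hq, m, hm⟩
    refine ⟨p * q, hF.2.1 _ hp _ hq, n + m, ?_⟩
    calc p * q * x ^ (n + m) = (p * x ^ n) * (q * x ^ m) := by
          rw [pow_add, mul_mul_mul_comm]
      _ ≤ a * b := rl_mul_le_mul hn hm
  · rintro a ⟨p, hp, n, hn⟩ y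
    exact ⟨p, hp, n, le_trans hn le_sup_left⟩

lemma rlGen_subset {F : Set A} (x : A) (hF : IsRLFilter F) : F ⊆ rlGen F x :=
  fun a ha => ⟨a, ha, 0, by simpa using le_rfl⟩

lemma rlGen_self_mem {F : Set A} (hF : IsRLFilter F) (x : A) : x ∈ rlGen F x :=
  ⟨1, rl_one_mem hF, 1, by simp⟩

/-- Prime separation lemma. -/
lemma rl_prime_sep {F S : Set A} (hF : IsRLFilter F) (hS1 : S.Nonempty)
    (hS2 : ∀ s ∈ S, ∀ t ∈ S, s ⊔ t ∈ S) (hFS : ∀ a ∈ F, a ∉ S) :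
    ∃ P : Set A, IsRLPrime P ∧ F ⊆ P ∧ ∀ a ∈ P, a ∉ S := by
  set 𝒮 : Set (Set A) := {G | IsRLFilter G ∧ F ⊆ G ∧ ∀ a ∈ G, a ∉ S} with h𝒮
  have hchainub : ∀ c ⊆ 𝒮, IsChain (· ⊆ ·) c → c.Nonempty →
      ∃ ub ∈ 𝒮, ∀ s ∈ c, s ⊆ ub := by
    intro c hc hchain hne
    refine ⟨⋃₀ c, ⟨⟨?_, ?_, ?_⟩, ?_, ?_⟩, fun s hs => Set.subset_sUnion_of_mem hs⟩
    · obtain ⟨G, hG⟩ := hne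
      obtain ⟨a, ha⟩ := (hc hG).1.1
      exact ⟨a, G, hG, ha⟩
    · rintro a ⟨G, hG, haG⟩ b ⟨H, hH, hbH⟩
      rcases hchain.total hG hH with hsub | hsub
      · exact ⟨H, hH, (hc hH).1.2.1 _ (hsub haG) _ hbH⟩
      · exact ⟨G, hG, (hc hG).1.2.1 _ haG _ (hsub hbH)⟩
    · rintro a ⟨G, hG, haG⟩ y
      exact ⟨G, hG, (hc hG).1.2.2 _ haG y⟩
    · obtain ⟨G, hG⟩ := hne
      exact le_trans (hc hG).2.1 (Set.subset_sUnion_of_mem hG)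
    · rintro a ⟨G, hG, haG⟩
      exact (hc hG).2.2 a haG
  obtain ⟨P, hFP, hPmem, hPmax⟩ := zorn_subset_nonempty 𝒮 hchainub F ⟨hF, le_refl _, hFS⟩
  · -- P is prime
    obtain ⟨hPfil, hFsub, hPS⟩ := hPmem
    refine ⟨P, ⟨hPfil, ?_, ?_⟩, hFP, hPS⟩
    · intro h
      obtain ⟨s, hs⟩ := hS1
      exact hPS s (by rw [h]; trivial) hs
    · intro a b hab
      by_contra hcon
      push_neg at hcon
      obtain ⟨ha, hb⟩ := hcon
      -- rlGen P a must meet S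
      have key : ∀ c : A, c ∉ P → ∃ s ∈ S, ∃ p ∈ P, ∃ n : ℕ, p * c ^ n ≤ s := by
        intro c hc
        by_contra hno
        push_neg at hno
        have hGmem : rlGen P c ∈ 𝒮 := by
          refine ⟨rlGen_filter hPfil c, le_trans hFsub (rlGen_subset c hPfil), ?_⟩
          rintro t ⟨p, hp, n, hn⟩ htS
          exact absurd hn (hno t htS p hp n)
        have := hPmax hGmem (rlGen_subset c hPfil)
        exact hc (this (rlGen_self_mem hPfil c))
      obtain ⟨s, hsS, p, hp, n, hpn⟩ := key a ha
      obtain ⟨t, htS, q, hq, m, hqm⟩ := key b hb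
      have h1 : p * q * (a ⊔ b) ^ (n + m) ∈ P :=
        hPfil.2.1 _ (hPfil.2.1 _ hp _ hq) _ (rl_pow_mem hPfil hab _)
      have h2 : p * q * (a ⊔ b) ^ (n + m) ≤ s ⊔ t := by
        calc p * q * (a ⊔ b) ^ (n + m) ≤ p * q * (a ^ n ⊔ b ^ m) :=
              rl_mul_le_mul le_rfl (rl_pow_sup_le a b (n + m) n m rfl)
          _ = p * q * a ^ n ⊔ p * q * b ^ m := rl_mul_sup _ _ _
          _ ≤ p * a ^ n ⊔ q * b ^ m := by
              apply sup_le
              · exact le_trans (rl_mul_le_mul (rl_mul_le_left p q) le_rfl) le_sup_left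
              · exact le_trans (rl_mul_le_mul (rl_mul_le_right p q) le_rfl) le_sup_right
          _ ≤ s ⊔ t := sup_le (le_trans hpn le_sup_left) (le_trans hqm le_sup_right)
      exact hPS _ (rl_mem_of_le hPfil h1 h2) (hS2 s hsS t htS)

lemma rl_min_of_crit {P : Set A} (hP : IsRLPrime P)
    (h : ∀ z ∈ P, ∃ y, y ∉ P ∧ z ⊔ y = 1) : IsRLMinPrime P := by
  refine ⟨hP, ?_⟩
  intro Q hQ hQP
  apply Set.Subset.antisymm hQP
  intro z hz
  obtain ⟨y, hy, hzy⟩ := h z hz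
  have h1 : z ⊔ y ∈ Q := hzy ▸ rl_one_mem hQ.1
  rcases hQ.2.2 z y h1 with h | h
  · exact h
  · exact absurd (hQP h) hy


lemma rl_crit_of_min {P : Set A} (hP : IsRLMinPrime P) {z : A} (hz : z ∈ P) :
    ∃ y, y ∉ P ∧ z ⊔ y = 1 := by
  by_contra hno
  push_neg at hno
  have hPne : P ≠ Set.univ := hP.1.2.1
  obtain ⟨c0, hc0⟩ : ∃ c, c ∉ P := by
    by_contra hcc; push_neg at hcc; exact hPne (Set.eq_univ_of_forall hcc)
  set S : Set A := {s | ∃ c, c ∉ P ∧ s = c ⊔ z} with hSdef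
  have hS1 : S.Nonempty := ⟨c0 ⊔ z, c0, hc0, rfl⟩
  have hS2 : ∀ s ∈ S, ∀ t ∈ S, s ⊔ t ∈ S := by
    rintro s ⟨c, hc, rfl⟩ t ⟨c', hc', rfl⟩
    refine ⟨c ⊔ c', fun hmem => ?_, by rw [sup_sup_sup_comm, sup_idem]⟩
    rcases hP.1.2.2 c c' hmem with h | h
    · exact hc h
    · exact hc' h
  have h1F : IsRLFilter ({1} : Set A) := by
    refine ⟨⟨1, rfl⟩, ?_, ?_⟩
    · intro a ha b hb
      simp only [Set.mem_singleton_iff] at ha hb ⊢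
      rw [ha, hb, mul_one]
    · intro a ha y
      simp only [Set.mem_singleton_iff] at ha ⊢
      rw [ha]; exact le_antisymm (rl_le_one _) le_sup_left
  have hFS : ∀ a ∈ ({1} : Set A), a ∉ S := by
    rintro a ha ⟨c, hc, rfl⟩
    simp only [Set.mem_singleton_iff] at ha
    exact hno c hc (by rw [sup_comm]; exact ha)
  obtain ⟨Q, hQp, _, hQS⟩ := rl_prime_sep h1F hS1 hS2 hFS
  have hQP : Q ⊆ P := by
    intro c hcQ
    by_contra hcP
    exact hQS _ (hQp.1.2.2 c hcQ z) ⟨c, hcP, rfl⟩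
  have hQeq : Q = P := hP.2 Q hQp hQP
  have hzQ : z ∈ Q := hQeq ▸ hz
  exact hQS _ (hQp.1.2.2 z hzQ c0) ⟨c0, hc0, sup_comm z c0⟩

lemma rl_rperp_singleton_iff {d : A} :
    rperp d = ({1} : Set A) ↔ ∀ a : A, a ⊔ d = 1 → a = 1 := by
  constructor
  · intro h a ha
    have hmem : a ∈ rperp d := by
      intro u hu
      rw [Set.mem_singleton_iff] at hu
      rw [hu]; exact ha
    rw [h] at hmem
    exact hmem
  · intro h
    ext a
    simp only [rperp, Coann, Set.mem_setOf_eq, Set.mem_singleton_iff, forall_eq]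
    constructor
    · exact h a
    · rintro rfl; exact le_antisymm (rl_le_one _) le_sup_left

theorem stmt5 :
    Quasicomplemented A ↔
      ∀ F : Set A, IsRLFilter F → (¬ ∃ d ∈ F, rperp d = {1}) →
        ∃ m : Set A, IsRLMinPrime m ∧ F ⊆ m := by
  constructor
  · -- forward
    intro hq F hF hnd
    set S : Set A := {d | ∀ a : A, a ⊔ d = 1 → a = 1} with hSdef
    have hFS : ∀ a ∈ F, a ∉ S := by
      intro a haF haS
      exact hnd ⟨a, haF, rl_rperp_singleton_iff.2 haS⟩
    have hS1 : S.Nonempty := ⟨⊥, by intro a ha; simpa using ha⟩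
    have hS2 : ∀ s ∈ S, ∀ t ∈ S, s ⊔ t ∈ S := by
      intro d hd e he a ha
      apply he
      apply hd (a ⊔ e)
      show a ⊔ e ⊔ d = 1
      rw [sup_assoc, sup_comm e d]
      exact ha
    obtain ⟨P, hPp, hFP, hPS⟩ := rl_prime_sep hF hS1 hS2 hFS
    refine ⟨P, rl_min_of_crit hPp ?_, hFP⟩
    intro w hw
    obtain ⟨y, hy⟩ := hq w
    have hww : w ∈ Coann (rperp w) := by
      intro c hc
      have := hc w rfl
      rw [sup_comm]; exact this
    have hwy : w ⊔ y = 1 := by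
      have hmem : w ∈ rperp y := hy ▸ hww
      exact hmem y rfl
    refine ⟨y, ?_, hwy⟩
    intro hyP
    have hmulP : w * y ∈ P := hPp.1.2.1 w hw y hyP
    apply hPS _ hmulP
    intro a ha
    have haw : a ⊔ w = 1 :=
      le_antisymm (rl_le_one _) (by rw [← ha]; exact sup_le_sup_left (rl_mul_le_left w y) a)
    have hay : a ⊔ y = 1 :=
      le_antisymm (rl_le_one _) (by rw [← ha]; exact sup_le_sup_left (rl_mul_le_right w y) a)
    have haCo : a ∈ Coann (rperp w) := by
      rw [hy]
      intro u hu
      rw [Set.mem_singleton_iff] at hu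
      rw [hu]; exact hay
    have haperp : a ∈ rperp w := by
      intro u hu
      rw [Set.mem_singleton_iff] at hu
      rw [hu]; exact haw
    have := haCo a haperp
    rwa [sup_idem] at this
  · -- backward
    intro h x
    set G : Set A := {a | ∃ b, b ⊔ x = 1 ∧ ∃ n : ℕ, b * x ^ n ≤ a} with hGdef
    have hGfil : IsRLFilter G := by
      refine ⟨⟨1, 1, le_antisymm (rl_le_one _) le_sup_left, 0, by simp⟩, ?_, ?_⟩
      · rintro a ⟨b, hb, n, hn⟩ a' ⟨b', hb', m, hm⟩
        refine ⟨b * b', ?_, n + m, ?_⟩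
        · have h1 : x ⊔ b = 1 := (sup_comm x b).trans hb
          have h2 : x ⊔ b' = 1 := (sup_comm x b').trans hb'
          exact (sup_comm (b * b') x).trans (rl_sup_mul_one h1 h2)
        · calc b * b' * x ^ (n + m) = (b * x ^ n) * (b' * x ^ m) := by rw [pow_add, mul_mul_mul_comm]
            _ ≤ a * a' := rl_mul_le_mul hn hm
      · rintro a ⟨b, hb, n, hn⟩ y
        exact ⟨b, hb, n, le_trans hn le_sup_left⟩
    have hxG : x ∈ G := ⟨1, le_antisymm (rl_le_one _) le_sup_left, 1, by simp⟩
    have hperpG : rperp x ⊆ G := fun c hc => ⟨c, hc x rfl, 0, by simp⟩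
    by_cases hd : ∃ d ∈ G, ∀ a : A, a ⊔ d = 1 → a = 1
    · obtain ⟨d, ⟨b, hbx, n, hbn⟩, hdense⟩ := hd
      refine ⟨b, ?_⟩
      ext a
      simp only [Coann, rperp, Set.mem_setOf_eq, Set.mem_singleton_iff, forall_eq]
      constructor
      · intro hc
        exact hc b hbx
      · intro hab c hcx'
        have h1 : (a ⊔ c) ⊔ b = 1 :=
          le_antisymm (rl_le_one _) (by rw [← hab]; exact sup_le_sup le_sup_left le_rfl)
        have h2 : (a ⊔ c) ⊔ x ^ n = 1 :=
          le_antisymm (rl_le_one _)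
            (by rw [← rl_sup_pow_one hcx' n]; exact sup_le_sup le_sup_right le_rfl)
        have h3 : (a ⊔ c) ⊔ b * x ^ n = 1 := rl_sup_mul_one h1 h2
        have h4 : (a ⊔ c) ⊔ d = 1 :=
          le_antisymm (rl_le_one _) (by rw [← h3]; exact sup_le_sup le_rfl hbn)
        exact hdense _ h4
    · exfalso
      have hnd : ¬ ∃ d ∈ G, rperp d = ({1} : Set A) := by
        rintro ⟨d, hdG, hd1⟩
        exact hd ⟨d, hdG, rl_rperp_singleton_iff.1 hd1⟩
      obtain ⟨m, hm, hGm⟩ := h G hGfil hnd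
      obtain ⟨y, hym, hxy⟩ := rl_crit_of_min hm (hGm hxG)
      have hyG : y ∈ G := hperpG (fun u hu => by
        rw [Set.mem_singleton_iff] at hu; rw [hu, sup_comm]; exact hxy)
      exact hym (hGm hyG)
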